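/- The pure-mixed normalization coefficient β^{rr}_{00} = binom(s,r)^{-1} ∑_{2m ≤ s−r} (1/(4^m m!)) · (r−s)_{2m}/((1/2−s)_m) equals binom(s,r)^{-1} · Γ(1/2+(r+s)/2)Γ(1+(r+s)/2)/(Γ(1/2+s)Γ(1+r)), i.e. (α_r)² := 1/β^{rr}_{00} = binom(s,r) · Γ(1/2+s)Γ(1+r)/(Γ(1/2+(r+s)/2)Γ(1+(r+s)/2)). -/

import Mathlib

open Finset

noncomputable section

/-- Rising factorial (Pochhammer symbol) (x)_n = x(x+1)⋯(x+n−1). -/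
def poch (x : ℝ) (n : ℕ) : ℝ := ∏ k ∈ Finset.range n, (x + k)

/-- β^{rr}_{00} = binom(s,r)⁻¹ ∑_{2m ≤ s−r} (1/(4^m m!))·(r−s)_{2m}/((1/2−s)_m). -/
def beta00 (s r : ℕ) : ℝ :=
  ((Nat.choose s r : ℝ))⁻¹ *
    ∑ m ∈ Finset.range ((s - r) / 2 + 1),
      (1 / (4 ^ m * (Nat.factorial m : ℝ))) *
        poch ((r : ℝ) - s) (2 * m) / poch (1 / 2 - s) m

lemma poch_zero (x : ℝ) : poch x 0 = 1 := by simp [poch]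
lemma poch_succ (x : ℝ) (n : ℕ) : poch x (n+1) = poch x n * (x + n) := by
  simp [poch, Finset.prod_range_succ]
lemma poch_shift (x : ℝ) (n : ℕ) : poch x n * (x + n) = x * poch (x+1) n := by
  induction n with
  | zero => simp [poch_zero]
  | succ n ih =>
    rw [poch_succ, poch_succ]
    push_cast
    calc poch x n * (x + n) * (x + (n+1)) = x * poch (x+1) n * (x + (n+1)) := by rw [ih]
    _ = x * (poch (x+1) n * ((x+1) + n)) := by ring
lemma half_ne (s k : ℕ) : (1/2 - (s:ℝ) + k) ≠ 0 := by
  intro hk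
  have h2 : 2*(k:ℝ) + 1 = 2*(s:ℝ) := by linarith
  have : 2*k + 1 = 2*s := by exact_mod_cast h2
  omega
lemma poch_half_ne (s m : ℕ) : poch (1/2 - (s:ℝ)) m ≠ 0 := by
  exact Finset.prod_ne_zero_iff.2 fun k _ => half_ne s k

def aa (s r m : ℕ) : ℝ :=
  (1 / (4 ^ m * (Nat.factorial m : ℝ))) * poch ((r : ℝ) - s) (2 * m) / poch (1 / 2 - s) m

def gg (s r m : ℕ) : ℝ := (-2*(m:ℝ)*(2*m-1-2*s)/((r:ℝ)-s)) * aa s r m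

lemma aa_eq (s r m : ℕ) : aa s r m =
    poch ((r:ℝ)-s) (2*m) / (4^m * (Nat.factorial m : ℝ) * poch (1/2-(s:ℝ)) m) := by
  unfold aa; ring

lemma tele (s r m : ℕ) (hr : r < s) :
    ((r:ℝ)+s+1) * aa s r m - 2*((r:ℝ)+1) * aa s (r+1) m = gg s r (m+1) - gg s r m := by
  have hx : (r:ℝ) - s ≠ 0 := by
    have : (r:ℝ) < s := by exact_mod_cast hr
    linarith
  set x : ℝ := (r:ℝ) - s with hxd
  set c : ℝ := 1/2 - (s:ℝ) with hcd
  set P : ℝ := poch x (2*m) with hPd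
  set C : ℝ := poch c m with hCd
  have hcm : (c + m) ≠ 0 := half_ne s m
  have hCne : C ≠ 0 := poch_half_ne s m
  have hfne : (Nat.factorial m : ℝ) ≠ 0 := by exact_mod_cast Nat.factorial_ne_zero m
  have hm1 : ((m:ℝ)+1) ≠ 0 := by positivity
  have h4 : ((4:ℝ)^m) ≠ 0 := by positivity
  -- p1 : poch x (2*(m+1)) = P * ((x+2m)*(x+2m+1))
  have p1 : poch x (2*(m+1)) = P * ((x + 2*m) * (x + 2*m + 1)) := by
    have e : 2*(m+1) = (2*m+1)+1 := by ring
    rw [e, poch_succ, poch_succ]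
    push_cast
    ring
  have p3 : poch c (m+1) = C * (c + m) := poch_succ c m
  have hA : aa s r m = P / (4^m * (Nat.factorial m : ℝ) * C) := aa_eq s r m
  have hB : aa s (r+1) m = (P * (x + 2*m) / x) / (4^m * (Nat.factorial m : ℝ) * C) := by
    rw [aa_eq]
    have e : ((r+1:ℕ):ℝ) - s = x + 1 := by push_cast; ring
    rw [e]
    congr 1
    rw [eq_div_iff hx]
    have h := poch_shift x (2*m)
    push_cast at h
    linarith [h]
  have hD : aa s r (m+1) =
      (P * ((x + 2*m) * (x + 2*m + 1))) / (4*4^m * (((m:ℝ)+1) * (Nat.factorial m : ℝ)) * (C * (c+m))) := by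
    rw [aa_eq, p1, p3]
    congr 1
    · push_cast [Nat.factorial_succ]; ring
  unfold gg
  rw [hA, hB, hD]
  push_cast
  rw [← hxd]
  field_simp
  rw [hxd, hcd]
  ring

def Ssum (s r : ℕ) : ℝ := ∑ m ∈ Finset.range ((s - r) / 2 + 1), aa s r m

lemma aa_zero_of_big (s r m : ℕ) (hr : r ≤ s) (hm : s - r < 2*m) : aa s r m = 0 := by
  unfold aa
  have e : (r:ℝ) - s = -(((s-r:ℕ)):ℝ) := by
    push_cast [Nat.cast_sub hr]; ring
  rw [e]
  have hz : poch (-(((s-r:ℕ)):ℝ)) (2*m) = 0 := by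
    refine Finset.prod_eq_zero (Finset.mem_range.2 hm) ?_
    simp
  rw [hz]; simp

lemma sum_ext (s r K : ℕ) (hr : r ≤ s) (hK : (s - r)/2 + 1 ≤ K) :
    ∑ m ∈ Finset.range K, aa s r m = Ssum s r := by
  unfold Ssum
  symm
  refine Finset.sum_subset (Finset.range_subset_range.2 hK) ?_
  intro m hmK hm
  simp only [Finset.mem_range, not_lt] at hm
  exact aa_zero_of_big s r m hr (by omega)

lemma gg_zero (s r : ℕ) : gg s r 0 = 0 := by simp [gg]

lemma step_eq (s r : ℕ) (hr : r < s) :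
    ((r:ℝ)+s+1) * Ssum s r = 2*((r:ℝ)+1) * Ssum s (r+1) := by
  set M := (s - r)/2 with hM
  have hsum : ∑ m ∈ Finset.range (M+1),
      (((r:ℝ)+s+1) * aa s r m - 2*((r:ℝ)+1) * aa s (r+1) m) = gg s r (M+1) - gg s r 0 := by
    rw [← Finset.sum_range_sub (gg s r)]
    exact Finset.sum_congr rfl fun m _ => tele s r m hr
  have hgM : gg s r (M+1) = 0 := by
    unfold gg
    rw [aa_zero_of_big s r (M+1) (le_of_lt hr) (by omega)]
    ring
  rw [hgM, gg_zero, Finset.sum_sub_distrib, ← Finset.mul_sum, ← Finset.mul_sum] at hsum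
  have h1 : ∑ m ∈ Finset.range (M+1), aa s r m = Ssum s r := by
    rw [hM]; rfl
  have h2 : ∑ m ∈ Finset.range (M+1), aa s (r+1) m = Ssum s (r+1) :=
    sum_ext s (r+1) (M+1) (by omega) (by omega)
  rw [h1, h2] at hsum
  linarith

def VV (s r : ℕ) : ℝ :=
  (Nat.factorial (r+s) : ℝ) * (Nat.factorial s : ℝ) * 2^(s-r) /
    ((Nat.factorial (2*s) : ℝ) * (Nat.factorial r : ℝ))

lemma Ssum_self (s : ℕ) : Ssum s s = 1 := by
  unfold Ssum
  rw [Nat.sub_self]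
  norm_num [aa, poch_zero]

lemma key (s : ℕ) : ∀ n r, r + n = s → Ssum s r = VV s r := by
  intro n
  induction n with
  | zero =>
    intro r hrs
    obtain rfl : r = s := by omega
    rw [Ssum_self]
    unfold VV
    have h2s : r + r = 2*r := by ring
    rw [h2s, Nat.sub_self]
    have : ((Nat.factorial (2*r) : ℝ)) ≠ 0 := by exact_mod_cast Nat.factorial_ne_zero _
    have : ((Nat.factorial r : ℝ)) ≠ 0 := by exact_mod_cast Nat.factorial_ne_zero _
    field_simp
  | succ n ih =>
    intro r hrs
    have hr : r < s := by omega
    have hstep := step_eq s r hr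
    have hS1 : Ssum s (r+1) = VV s (r+1) := ih (r+1) (by omega)
    rw [hS1] at hstep
    have hrs1 : ((r:ℝ)+s+1) ≠ 0 := by positivity
    have hgoal : 2*((r:ℝ)+1) * VV s (r+1) = ((r:ℝ)+s+1) * VV s r := by
      unfold VV
      have e1 : r + 1 + s = (r+s) + 1 := by ring
      rw [e1, Nat.factorial_succ, Nat.factorial_succ]
      have e2 : s - r = (s - (r+1)) + 1 := by omega
      rw [e2, pow_succ]
      have hne1 : ((Nat.factorial (2*s) : ℝ)) ≠ 0 := by exact_mod_cast Nat.factorial_ne_zero _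
      have hne2 : ((Nat.factorial r : ℝ)) ≠ 0 := by exact_mod_cast Nat.factorial_ne_zero _
      have hne3 : ((Nat.factorial (r+1) : ℝ)) ≠ 0 := by exact_mod_cast Nat.factorial_ne_zero _
      push_cast
      field_simp
    have h2 : ((r:ℝ)+s+1) * Ssum s r = ((r:ℝ)+s+1) * VV s r := by rw [hstep, hgoal]
    exact mul_left_cancel₀ hrs1 h2

lemma gA (r s : ℕ) :
    Real.Gamma (1/2 + ((r:ℝ)+s)/2) * Real.Gamma (1 + ((r:ℝ)+s)/2) =
      (Nat.factorial (r+s) : ℝ) * ((2:ℝ)^(r+s))⁻¹ * Real.sqrt Real.pi := by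
  have h := Real.Gamma_mul_Gamma_add_half (((r:ℝ)+s)/2 + 1/2)
  have e1 : (1:ℝ)/2 + ((r:ℝ)+s)/2 = ((r:ℝ)+s)/2 + 1/2 := by ring
  have e2 : (1:ℝ) + ((r:ℝ)+s)/2 = (((r:ℝ)+s)/2 + 1/2) + 1/2 := by ring
  have e3 : 2 * (((r:ℝ)+s)/2 + 1/2) = ((r+s : ℕ):ℝ) + 1 := by push_cast; ring
  have e4 : (1:ℝ) - 2 * (((r:ℝ)+s)/2 + 1/2) = -((r+s:ℕ):ℝ) := by push_cast; ring
  rw [e4, e3] at h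
  rw [e1, e2, h, Real.Gamma_nat_eq_factorial]
  congr 1
  congr 1
  rw [Real.rpow_neg (by norm_num), Real.rpow_natCast]

lemma gB (s : ℕ) :
    Real.Gamma (1/2 + (s:ℝ)) * (Nat.factorial s : ℝ) =
      (Nat.factorial (2*s) : ℝ) * ((2:ℝ)^(2*s))⁻¹ * Real.sqrt Real.pi := by
  have h := Real.Gamma_mul_Gamma_add_half ((s:ℝ) + 1/2)
  have e1 : (s:ℝ) + 1/2 = 1/2 + (s:ℝ) := by ring
  have e2 : ((s:ℝ) + 1/2) + 1/2 = (s:ℝ) + 1 := by ring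
  have e3 : 2 * ((s:ℝ) + 1/2) = ((2*s : ℕ):ℝ) + 1 := by push_cast; ring
  have e4 : (1:ℝ) - 2 * ((s:ℝ) + 1/2) = -((2*s:ℕ):ℝ) := by push_cast; ring
  rw [e4, e2, e3] at h
  rw [Real.Gamma_nat_eq_factorial, Real.Gamma_nat_eq_factorial] at h
  rw [← e1, h]
  congr 1
  congr 1
  rw [Real.rpow_neg (by norm_num), Real.rpow_natCast]

lemma ratio_eq (s r : ℕ) (h : r ≤ s) :
    (Real.Gamma (1/2 + ((r:ℝ)+s)/2) * Real.Gamma (1 + ((r:ℝ)+s)/2)) /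
      (Real.Gamma (1/2 + (s:ℝ)) * Real.Gamma (1 + (r:ℝ))) = VV s r := by
  have hB := gB s
  have hA := gA r s
  have hr : Real.Gamma (1 + (r:ℝ)) = (Nat.factorial r : ℝ) := by
    rw [add_comm]; exact Real.Gamma_nat_eq_factorial r
  have hsf : ((Nat.factorial s : ℕ):ℝ) ≠ 0 := by exact_mod_cast Nat.factorial_ne_zero s
  have hrf : ((Nat.factorial r : ℕ):ℝ) ≠ 0 := by exact_mod_cast Nat.factorial_ne_zero r
  have h2sf : ((Nat.factorial (2*s) : ℕ):ℝ) ≠ 0 := by exact_mod_cast Nat.factorial_ne_zero _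
  have hsqrt : Real.sqrt Real.pi ≠ 0 := by positivity
  have hGB : Real.Gamma (1/2 + (s:ℝ)) =
      (Nat.factorial (2*s) : ℝ) * ((2:ℝ)^(2*s))⁻¹ * Real.sqrt Real.pi / (Nat.factorial s : ℝ) := by
    rw [eq_div_iff hsf]; exact hB
  rw [hA, hGB, hr]
  unfold VV
  have h2pow : (2:ℝ)^(2*s) = (2:ℝ)^(r+s) * (2:ℝ)^(s-r) := by
    rw [← pow_add]; congr 1; omega
  rw [h2pow]
  have h1 : ((2:ℝ)^(r+s)) ≠ 0 := by positivity
  have h2 : ((2:ℝ)^(s-r)) ≠ 0 := by positivity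
  field_simp

lemma beta00_eq (s r : ℕ) : beta00 s r = ((Nat.choose s r : ℝ))⁻¹ * Ssum s r := rfl

lemma VV_pos (s r : ℕ) : 0 < VV s r := by
  unfold VV
  have h1 : (0:ℝ) < (Nat.factorial (r+s) : ℝ) := by exact_mod_cast Nat.factorial_pos _
  have h2 : (0:ℝ) < (Nat.factorial s : ℝ) := by exact_mod_cast Nat.factorial_pos _
  have h3 : (0:ℝ) < (Nat.factorial (2*s) : ℝ) := by exact_mod_cast Nat.factorial_pos _
  have h4 : (0:ℝ) < (Nat.factorial r : ℝ) := by exact_mod_cast Nat.factorial_pos _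
  positivity

/-- β^{rr}_{00} = binom(s,r)⁻¹ Γ(1/2+(r+s)/2)Γ(1+(r+s)/2)/(Γ(1/2+s)Γ(1+r)),
i.e. (α_r)² = 1/β^{rr}_{00} = binom(s,r)·Γ(1/2+s)Γ(1+r)/(Γ(1/2+(r+s)/2)Γ(1+(r+s)/2)). -/
theorem stmt9 (s r : ℕ) (h : r ≤ s) :
    beta00 s r = ((Nat.choose s r : ℝ))⁻¹ *
        (Real.Gamma (1 / 2 + ((r : ℝ) + s) / 2) * Real.Gamma (1 + ((r : ℝ) + s) / 2)) /
        (Real.Gamma (1 / 2 + (s : ℝ)) * Real.Gamma (1 + (r : ℝ))) ∧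
    1 / beta00 s r = (Nat.choose s r : ℝ) *
        (Real.Gamma (1 / 2 + (s : ℝ)) * Real.Gamma (1 + (r : ℝ))) /
        (Real.Gamma (1 / 2 + ((r : ℝ) + s) / 2) * Real.Gamma (1 + ((r : ℝ) + s) / 2)) := by
  have hS : Ssum s r = VV s r := key s (s - r) r (by omega)
  have hb : beta00 s r = ((Nat.choose s r : ℝ))⁻¹ * VV s r := by rw [beta00_eq, hS]
  have hratio := ratio_eq s r h
  have hC : (0:ℝ) < (Nat.choose s r : ℝ) := by exact_mod_cast Nat.choose_pos h
  have hG1 : (0:ℝ) < Real.Gamma (1 / 2 + ((r : ℝ) + s) / 2) := by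
    apply Real.Gamma_pos_of_pos; positivity
  have hG2 : (0:ℝ) < Real.Gamma (1 + ((r : ℝ) + s) / 2) := by
    apply Real.Gamma_pos_of_pos; positivity
  have hG3 : (0:ℝ) < Real.Gamma (1 / 2 + (s : ℝ)) := by
    apply Real.Gamma_pos_of_pos; positivity
  have hG4 : (0:ℝ) < Real.Gamma (1 + (r : ℝ)) := by
    apply Real.Gamma_pos_of_pos; positivity
  constructor
  · rw [hb, mul_div_assoc, hratio]
  · rw [hb, ← hratio]
    rw [one_div, mul_inv, inv_inv]
    have hden : (Real.Gamma (1 / 2 + (s : ℝ)) * Real.Gamma (1 + (r : ℝ))) ≠ 0 := by positivity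
    have hnum : (Real.Gamma (1 / 2 + ((r : ℝ) + s) / 2) * Real.Gamma (1 + ((r : ℝ) + s) / 2)) ≠ 0 := by
      positivity
    field_simp
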